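/- Let k be an integer, j ≥ 0 an integer, and s a real number with 1 < s and 1 < k − s. Then the j-th iterated derivative at s of the function x ↦ ζ'(x)/ζ(x) − ζ'(k−x)/ζ(k−x) equals Σ_{r=1}^{∞} Λ(r) · (log r)^j · ( (−1)^{j+1} · r^{−s} + r^{−(k−s)} ), where Λ is the von Mangoldt function. -/

import Mathlib

open Complex

open LSeries ArithmeticFunction

private lemma logMul_iterate_apply (f : ℕ → ℂ) (j n : ℕ) :
    (logMul)^[j] f n = (Complex.log n) ^ j * f n := by
  induction j with
  | zero => simp
  | succ m ih =>
    rw [Function.iterate_succ', Function.comp_apply, logMul, ih, pow_succ]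
    ring

private lemma absc_vonMangoldt : abscissaOfAbsConv (fun n => ((Λ n : ℝ) : ℂ)) ≤ 1 := by
  have := abscissaOfAbsConv_le_of_forall_lt_LSeriesSummable (f := fun n => ((Λ n : ℝ) : ℂ))
    (x := 1) (fun y hy => LSeriesSummable_vonMangoldt (by simpa using hy))
  simpa using this

private lemma iterDW_open {n : ℕ} {U : Set ℂ} (hU : IsOpen U) {x : ℂ} (hx : x ∈ U) (f : ℂ → ℂ) :
    iteratedDerivWithin n f U x = iteratedDeriv n f x := by
  rw [iteratedDerivWithin_eq_iteratedFDerivWithin, iteratedDeriv_eq_iteratedFDeriv,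
    iteratedFDerivWithin_of_isOpen n hU hx]

/-- Dirichlet-series expansion of the iterated derivatives of the difference of logarithmic
derivatives of `ζ` (the function `Z_{j+1}` of the paper): for real `s` with `1 < s` and
`1 < k − s`,
`(d/ds)^j (ζ'(s)/ζ(s) − ζ'(k−s)/ζ(k−s))
    = Σ_{r≥1} Λ(r) (log r)^j ((−1)^{j+1} r^{−s} + r^{−(k−s)})`,
where `Λ` is the von Mangoldt function. -/
theorem iteratedDeriv_zetaLogDeriv_diff_eq_tsum_vonMangoldt
    (k : ℤ) (j : ℕ) (s : ℝ) (hs : 1 < s) (hks : 1 < (k : ℝ) - s) :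
    iteratedDeriv j
      (fun x : ℂ => deriv riemannZeta x / riemannZeta x -
        deriv riemannZeta ((k : ℂ) - x) / riemannZeta ((k : ℂ) - x)) (s : ℂ) =
    ∑' r : ℕ,
      ((ArithmeticFunction.vonMangoldt (r + 1) : ℝ) : ℂ) *
        ((Real.log (r + 1) : ℝ) : ℂ) ^ j *
        ((-1 : ℂ) ^ (j + 1) * ((r + 1 : ℕ) : ℂ) ^ (-(s : ℂ)) +
          ((r + 1 : ℕ) : ℂ) ^ (-((k : ℂ) - (s : ℂ)))) := by
  set L : ℕ → ℂ := fun n => ((Λ n : ℝ) : ℂ) with hL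
  set V : Set ℂ := {x | abscissaOfAbsConv L < x.re} with hV
  have hVopen : IsOpen V := isOpen_re_gt_EReal _
  have hmemV : ∀ {x : ℂ}, 1 < x.re → x ∈ V := fun {x} hx =>
    lt_of_le_of_lt absc_vonMangoldt (by exact_mod_cast hx)
  set U : Set ℂ := {x : ℂ | 1 < x.re ∧ 1 < ((k : ℂ) - x).re} with hUdef
  have hUopen : IsOpen U := by
    refine IsOpen.and (isOpen_lt continuous_const Complex.continuous_re) ?_
    exact isOpen_lt continuous_const (Complex.continuous_re.comp (continuous_const.sub continuous_id))
  have hsU : (s : ℂ) ∈ U := by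
    constructor
    · simpa using hs
    · simpa [Complex.sub_re] using hks
  -- the two pieces
  set g₁ : ℂ → ℂ := fun x => -(LSeries L x) with hg₁
  set g₂ : ℂ → ℂ := fun x => LSeries L ((k : ℂ) - x) with hg₂
  -- step A: replace F by g₁ + g₂ near s
  have hstepA : iteratedDeriv j
      (fun x : ℂ => deriv riemannZeta x / riemannZeta x -
        deriv riemannZeta ((k : ℂ) - x) / riemannZeta ((k : ℂ) - x)) (s : ℂ)
      = iteratedDeriv j (g₁ + g₂) (s : ℂ) := by
    refine Filter.EventuallyEq.iteratedDeriv_eq j ?_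
    filter_upwards [hUopen.mem_nhds hsU] with x hx
    have h1 := LSeries_vonMangoldt_eq_deriv_riemannZeta_div hx.1
    have h2 := LSeries_vonMangoldt_eq_deriv_riemannZeta_div hx.2
    rw [neg_div] at h1 h2
    simp only [Pi.add_apply, hg₁, hg₂, hL]
    rw [show deriv riemannZeta x / riemannZeta x = -(LSeries L x) from by rw [hL]; exact (neg_eq_iff_eq_neg.mpr h1).symm]
    rw [show deriv riemannZeta ((k:ℂ) - x) / riemannZeta ((k:ℂ) - x) = -(LSeries L ((k:ℂ)-x)) from by rw [hL]; exact (neg_eq_iff_eq_neg.mpr h2).symm]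
    ring
  -- contDiffOn facts
  have hLV : ContDiffOn ℂ j (LSeries L) V :=
    (LSeries_analyticOnNhd L).contDiffOn hVopen.uniqueDiffOn
  have hUV : U ⊆ V := fun x hx => hmemV hx.1
  have hc₁ : ContDiffOn ℂ j g₁ U := ((hLV.mono hUV).neg)
  have hc₂ : ContDiffOn ℂ j g₂ U := by
    refine hLV.comp ((contDiff_const.sub contDiff_id).contDiffOn) ?_
    exact fun x hx => hmemV hx.2
  -- step B: split the sum
  have hstepB : iteratedDeriv j (g₁ + g₂) (s : ℂ)
      = iteratedDeriv j g₁ (s : ℂ) + iteratedDeriv j g₂ (s : ℂ) := by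
    rw [← iterDW_open hUopen hsU, ← iterDW_open hUopen hsU g₁, ← iterDW_open hUopen hsU g₂]
    exact iteratedDerivWithin_add hsU hUopen.uniqueDiffOn (hc₁ _ hsU) (hc₂ _ hsU)
  -- step C
  have hstepC : iteratedDeriv j g₁ (s : ℂ) = -(iteratedDeriv j (LSeries L) (s : ℂ)) :=
    iteratedDeriv_neg j _ _
  -- step D
  have hstepD : iteratedDeriv j g₂ (s : ℂ)
      = (-1 : ℂ) ^ j • iteratedDeriv j (LSeries L) ((k : ℂ) - (s : ℂ)) := by
    have he : g₂ = fun x => (fun z => LSeries L ((k : ℂ) + z)) (-x) := by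
      funext x; simp [hg₂, sub_eq_add_neg]
    rw [he, iteratedDeriv_comp_neg j (fun z => LSeries L ((k : ℂ) + z)) (s : ℂ),
      iteratedDeriv_comp_const_add j (LSeries L) (k : ℂ)]
    simp [sub_eq_add_neg]
  -- step E: iterated derivatives of the L-series
  have habs₁ : abscissaOfAbsConv L < ((s : ℂ)).re := by
    refine lt_of_le_of_lt absc_vonMangoldt ?_
    simpa using (by exact_mod_cast hs : (1 : EReal) < ((s:ℂ).re : EReal))
  have habs₂ : abscissaOfAbsConv L < (((k : ℂ) - (s : ℂ))).re := by
    refine lt_of_le_of_lt absc_vonMangoldt ?_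
    have : (1 : ℝ) < ((k : ℂ) - (s : ℂ)).re := by simpa [Complex.sub_re] using hks
    exact_mod_cast this
  have hE₁ := LSeries_iteratedDeriv (f := L) j habs₁
  have hE₂ := LSeries_iteratedDeriv (f := L) j habs₂
  have hsum₁ : LSeriesSummable (logMul^[j] L) (s : ℂ) :=
    LSeriesSummable_of_abscissaOfAbsConv_lt_re (by rwa [absicssaOfAbsConv_logPowMul])
  have hsum₂ : LSeriesSummable (logMul^[j] L) ((k : ℂ) - (s : ℂ)) :=
    LSeriesSummable_of_abscissaOfAbsConv_lt_re (by rwa [absicssaOfAbsConv_logPowMul])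
  rw [hstepA, hstepB, hstepC, hstepD, hE₁, hE₂, smul_eq_mul]
  have key : -((-1:ℂ)^j * LSeries (logMul^[j] L) (s:ℂ))
      + (-1:ℂ)^j * ((-1:ℂ)^j * LSeries (logMul^[j] L) ((k:ℂ) - (s:ℂ)))
      = (-1:ℂ)^(j+1) * LSeries (logMul^[j] L) (s:ℂ)
        + LSeries (logMul^[j] L) ((k:ℂ) - (s:ℂ)) := by
    have h : (-1:ℂ)^j * (-1:ℂ)^j = 1 := by
      rw [← mul_pow]; norm_num
    rw [← mul_assoc, h, one_mul, pow_succ]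
    ring
  rw [key]
  have hA : LSeries (logMul^[j] L) (s:ℂ) = ∑' n : ℕ, term (logMul^[j] L) (s:ℂ) n := rfl
  have hB : LSeries (logMul^[j] L) ((k:ℂ)-(s:ℂ))
      = ∑' n : ℕ, term (logMul^[j] L) ((k:ℂ)-(s:ℂ)) n := rfl
  rw [hA, hB, ← tsum_mul_left, ← Summable.tsum_add (hsum₁.mul_left _) hsum₂]
  have hcsum : Summable (fun n : ℕ => (-1:ℂ)^(j+1) * term (logMul^[j] L) (s:ℂ) n
      + term (logMul^[j] L) ((k:ℂ)-(s:ℂ)) n) := (hsum₁.mul_left _).add hsum₂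
  rw [Summable.tsum_eq_zero_add hcsum]
  simp only [term_zero, mul_zero, add_zero, zero_add]
  refine tsum_congr fun r => ?_
  have hr : (r + 1 : ℕ) ≠ 0 := Nat.succ_ne_zero r
  rw [term_of_ne_zero hr, term_of_ne_zero hr, logMul_iterate_apply]
  have hlog : ((Real.log ((r:ℝ) + 1) : ℝ) : ℂ) = Complex.log ((r + 1 : ℕ) : ℂ) := by
    rw [show ((r:ℝ)+1) = ((r+1:ℕ):ℝ) by push_cast; ring, Complex.natCast_log]
  have hL1 : L (r+1) = ((Λ (r+1) : ℝ) : ℂ) := rfl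
  rw [hL1]
  push_cast [hlog, Complex.cpow_neg, div_eq_mul_inv]
  ring
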